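/- The semidirect product $C_7 \rtimes C_9$, where the generator of $C_9$ acts on $C_7$ by $x \mapsto x^2$ (an automorphism of order 3, so the kernel of the action is the subgroup $C_3 \leq C_9$), has exactly 15 conjugacy classes. -/

import Mathlib

/-- The cyclic group `Cₙ`, written multiplicatively. -/
abbrev Cyc (n : ℕ) : Type := Multiplicative (ZMod n)

/-- A unit `u` of `ZMod n` gives the automorphism `x ↦ x ^ u` (written
multiplicatively) of the cyclic group `Cₙ`. -/
def cycAut (n : ℕ) : (ZMod n)ˣ →* MulAut (Cyc n) where
  toFun u := AddEquiv.toMultiplicative (DistribMulAction.toAddAut (ZMod n)ˣ (ZMod n) u)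
  map_one' := by ext x; simp
  map_mul' _ _ := by ext x; simp [mul_smul]

/-- The homomorphism `C_k →* G` sending the generator `1` of `C_k = ZMod k`
to a chosen element `g` with `g ^ k = 1`. -/
noncomputable def genMap {G : Type} [Group G] (k : ℕ) (g : G) (hg : g ^ k = 1) :
    Multiplicative (ZMod k) →* G :=
  AddMonoidHom.toMultiplicativeLeft
    (ZMod.lift k ⟨zmultiplesHom (Additive G) (Additive.ofMul g), by
      simpa [zmultiplesHom, ← ofMul_pow] using congrArg Additive.ofMul hg⟩)

/-- The unit `2` of `ZMod 7`. -/
def theUnit : (ZMod 7)ˣ := ZMod.unitOfCoprime 2 (by decide)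

/-- The action of `C_9` on `C_7` where the generator acts by `x ↦ x^2`. -/
noncomputable def theAct : Multiplicative (ZMod 9) →* MulAut (Cyc 7) :=
  genMap 9 (cycAut 7 theUnit)
    (by rw [← map_pow]; norm_num [show theUnit ^ 9 = 1 from by decide])

/-- The semidirect product `C_7 ⋊ C_9`, where the generator of `C_9`
acts on `C_7` by `x ↦ x^2`. -/
noncomputable abbrev C7C9 : Type := Cyc 7 ⋊[theAct] Multiplicative (ZMod 9)

open Multiplicative

/-- A computable version of `theAct`. -/
def phi : Multiplicative (ZMod 9) →* MulAut (Cyc 7) where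
  toFun g := cycAut 7 (theUnit ^ (toAdd g).val)
  map_one' := by simp [show (toAdd (1 : Multiplicative (ZMod 9))).val = 0 from rfl]
  map_mul' a b := by
    show cycAut 7 _ = cycAut 7 _ * cycAut 7 _
    rw [← map_mul (cycAut 7)]
    congr 1
    rw [← pow_add]
    have h9 : theUnit ^ 9 = 1 := by decide
    have : (toAdd (a * b)).val = ((toAdd a).val + (toAdd b).val) % 9 := ZMod.val_add _ _
    rw [this, ← pow_eq_pow_mod _ h9]

lemma genMap_apply {G : Type} [Group G] (k : ℕ) (g : G) (hg : g ^ k = 1) (m : ℤ) :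
    genMap k g hg (ofAdd ((m : ℤ) : ZMod k)) = g ^ m := by
  change Additive.toMul (ZMod.lift k _ (m : ZMod k)) = g ^ m
  simp [ZMod.lift_coe]

lemma theAct_eq : theAct = phi := by
  refine MonoidHom.ext fun g => ?_
  have : g = ofAdd ((((toAdd g).val : ℤ)) : ZMod 9) := by simp
  rw [this]
  rw [theAct, genMap_apply]
  simp only [phi, MonoidHom.coe_mk, OneHom.coe_mk, toAdd_ofAdd, ZMod.val_natCast,
    zpow_natCast, ← map_pow (cycAut 7)]
  congr 1
  have h9 : theUnit ^ 9 = 1 := by decide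
  exact pow_eq_pow_mod _ h9

/-- A computable version of `C7C9`. -/
abbrev G' : Type := Cyc 7 ⋊[phi] Multiplicative (ZMod 9)

noncomputable def G'equiv : C7C9 ≃* G' where
  toFun x := ⟨x.1, x.2⟩
  invFun x := ⟨x.1, x.2⟩
  left_inv x := rfl
  right_inv x := rfl
  map_mul' a b := by
    ext <;> simp [SemidirectProduct.mul_left, SemidirectProduct.mul_right, theAct_eq]

instance : Fintype G' := Fintype.ofEquiv ((ZMod 7) × (ZMod 9))
  ⟨fun p => ⟨ofAdd p.1, ofAdd p.2⟩, fun x => (toAdd x.1, toAdd x.2), fun _ => rfl, fun _ => rfl⟩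

instance : DecidableRel (IsConj : G' → G' → Prop) :=
  fun a b => decidable_of_iff (∃ c : G', c * a * c⁻¹ = b) isConj_iff.symm

instance : Fintype (ConjClasses G') :=
  @Quotient.fintype _ _ (IsConj.setoid G')
    (fun a b => inferInstanceAs (Decidable (IsConj a b)))

noncomputable def conjClassesEquiv : ConjClasses C7C9 ≃ ConjClasses G' :=
  Quotient.congr G'equiv.toEquiv (fun a b =>
    ⟨fun h => G'equiv.toMonoidHom.map_isConj h,
     fun h => show IsConj a b by simpa using G'equiv.symm.toMonoidHom.map_isConj h⟩)

set_option maxRecDepth 100000 in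
set_option maxHeartbeats 4000000 in
lemma G'_card : Fintype.card (ConjClasses G') = 15 := by decide

/-- `C7C9` has exactly 15 conjugacy classes. -/
theorem C7C9_card_conjClasses : Nat.card (ConjClasses C7C9) = 15 := by
  rw [Nat.card_congr conjClassesEquiv, Nat.card_eq_fintype_card, G'_card]
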